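/- For any directed path π as above, there exist constants c, C > 0 such that c n² ≤ 𝟙_π^T A_n² 𝟙_π ≤ C n² for all n ≥ 2. -/

import Mathlib

/-- The vertex set `V_n = {(i,u) ∈ ℤ² : 0 ≤ i < n, |u| ≤ i, i - u even}`. -/
noncomputable def triVertices (n : ℕ) : Finset (ℤ × ℤ) :=
  (Finset.Icc (-(n : ℤ)) n ×ˢ Finset.Icc (-(n : ℤ)) n).filter
    (fun p => 0 ≤ p.1 ∧ p.1 < n ∧ |p.2| ≤ p.1 ∧ (p.1 - p.2) % 2 = 0)

/-- The matrix entry: `A[(i,u),(j,v)] = 1/|i-j|` if `i ≠ j` and `|u-v| ≤ |i-j|`,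
and `0` otherwise. -/
noncomputable def triEntry (p q : ℤ × ℤ) : ℝ :=
  if p.1 ≠ q.1 ∧ |p.2 - q.2| ≤ |p.1 - q.1| then |(p.1 : ℝ) - (q.1 : ℝ)|⁻¹ else 0

lemma triEntry_nonneg (p q : ℤ × ℤ) : 0 ≤ triEntry p q := by
  unfold triEntry; split
  · positivity
  · exact le_refl 0

lemma path_step (p : ℕ → ℤ) (hs : ∀ i : ℕ, |p (i + 1) - p i| = 1) (i : ℕ) :
    p (i + 1) = p i + 1 ∨ p (i + 1) = p i - 1 := by
  have := hs i
  rcases abs_eq (by norm_num : (0:ℤ) ≤ 1) |>.mp this with h | h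
  · left; omega
  · right; omega

lemma path_parity (p : ℕ → ℤ) (h0 : p 0 = 0) (hs : ∀ i : ℕ, |p (i + 1) - p i| = 1) :
    ∀ m : ℕ, ((m : ℤ) - p m) % 2 = 0 := by
  intro m
  induction m with
  | zero => simp [h0]
  | succ k ih =>
    rcases path_step p hs k with h | h <;> push_cast <;> omega

lemma path_lip_aux (p : ℕ → ℤ) (hs : ∀ i : ℕ, |p (i + 1) - p i| = 1) :
    ∀ m a : ℕ, |p (a + m) - p a| ≤ (m : ℤ) := by
  intro m
  induction m with
  | zero => simp
  | succ k ih =>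
    intro a
    have h1 := ih a
    have h2 := hs (a + k)
    calc |p (a + (k+1)) - p a| = |(p (a + k + 1) - p (a+k)) + (p (a + k) - p a)| := by
          ring_nf
    _ ≤ |p (a + k + 1) - p (a+k)| + |p (a + k) - p a| := abs_add_le _ _
    _ ≤ 1 + k := by rw [h2]; linarith
    _ = ((k+1 : ℕ) : ℤ) := by push_cast; ring

lemma path_lip (p : ℕ → ℤ) (hs : ∀ i : ℕ, |p (i + 1) - p i| = 1) (a b : ℕ) :
    |p a - p b| ≤ |(a : ℤ) - (b : ℤ)| := by
  rcases le_total a b with h | h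
  · obtain ⟨m, rfl⟩ := Nat.exists_eq_add_of_le h
    rw [abs_sub_comm]
    calc |p (a + m) - p a| ≤ (m:ℤ) := path_lip_aux p hs m a
    _ = |(a:ℤ) - (a + m : ℕ)| := by push_cast; rw [abs_sub_comm]; simp [abs_of_nonneg]
  · obtain ⟨m, rfl⟩ := Nat.exists_eq_add_of_le h
    calc |p (b + m) - p b| ≤ (m:ℤ) := path_lip_aux p hs m b
    _ = |((b + m : ℕ):ℤ) - b| := by push_cast; simp [abs_of_nonneg]

lemma sqrt_harmonic : ∀ m : ℕ, ∑ d ∈ Finset.range m, (Real.sqrt (d + 1))⁻¹ ≤ 2 * Real.sqrt m := by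
  intro m
  induction m with
  | zero => simp
  | succ k ih =>
    rw [Finset.sum_range_succ]
    have h1 : Real.sqrt (k + 1) ≠ 0 := by positivity
    have h2 : (0:ℝ) < Real.sqrt (k+1) := by positivity
    have h3 : Real.sqrt k ≤ Real.sqrt (k+1) := by
      apply Real.sqrt_le_sqrt; push_cast; linarith
    have key : (Real.sqrt (k+1))⁻¹ ≤ 2 * Real.sqrt (k+1) - 2 * Real.sqrt k := by
      rw [inv_le_iff_one_le_mul₀ h2] at *
      have hsq : Real.sqrt (k+1) * Real.sqrt (k+1) = (k+1 : ℝ) := by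
        rw [← Real.sqrt_mul_self (by positivity : (0:ℝ) ≤ (k:ℝ)+1)]; norm_num
      have hsq2 : Real.sqrt k * Real.sqrt k = (k : ℝ) := Real.mul_self_sqrt (by positivity)
      nlinarith [h2, h3, Real.sqrt_nonneg (k:ℝ)]
    have : ((k:ℝ)+1) = ((k+1 : ℕ) : ℝ) := by push_cast; ring
    push_cast
    linarith

lemma sqrt_harmonic' (m : ℕ) : ∑ d ∈ Finset.range m, (Real.sqrt d)⁻¹ ≤ 2 * Real.sqrt m := by
  cases m with
  | zero => simp
  | succ k =>
    rw [Finset.sum_range_succ']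
    have e0 : (Real.sqrt ((0:ℕ):ℝ))⁻¹ = 0 := by norm_num
    rw [e0, add_zero]
    have h1 : ∑ d ∈ Finset.range k, (Real.sqrt (((d+1:ℕ):ℝ)))⁻¹
        = ∑ d ∈ Finset.range k, (Real.sqrt ((d:ℝ)+1))⁻¹ := by
      apply Finset.sum_congr rfl; intro d _; push_cast; ring_nf
    rw [h1]
    calc ∑ d ∈ Finset.range k, (Real.sqrt ((d:ℝ)+1))⁻¹ ≤ 2 * Real.sqrt k := sqrt_harmonic k
    _ ≤ 2 * Real.sqrt ((k+1:ℕ):ℝ) := by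
          have : Real.sqrt (k:ℝ) ≤ Real.sqrt ((k+1:ℕ):ℝ) := by
            apply Real.sqrt_le_sqrt; push_cast; linarith
          linarith

lemma hsum (n : ℕ) (k : ℤ) (hk1 : -(n:ℤ) ≤ k) (hk2 : k ≤ n) :
    ∑ i ∈ Finset.range n, (Real.sqrt |(i:ℝ) - (k:ℝ)|)⁻¹ ≤ 4 * Real.sqrt (2*n+1) := by
  have fnn : ∀ d : ℕ, 0 ≤ (Real.sqrt d)⁻¹ := fun d => by positivity
  rw [← Finset.sum_filter_add_sum_filter_not (Finset.range n) (fun i => (i:ℤ) < k)]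
  have side : ∀ (s : Finset ℕ) (g : ℕ → ℤ), (∀ i ∈ s, 0 ≤ g i) → (∀ i ∈ s, g i ≤ 2*n) →
      (∀ i ∈ s, ∀ j ∈ s, g i = g j → i = j) →
      (∀ i ∈ s, |(i:ℝ) - (k:ℝ)| = ((g i : ℤ) : ℝ)) →
      ∑ i ∈ s, (Real.sqrt |(i:ℝ) - (k:ℝ)|)⁻¹ ≤ 2 * Real.sqrt (2*n+1) := by
    intro s g hg0 hg2 hginj hgabs
    have e1 : ∑ i ∈ s, (Real.sqrt |(i:ℝ) - (k:ℝ)|)⁻¹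
        = ∑ i ∈ s, (fun d : ℕ => (Real.sqrt d)⁻¹) ((g i).toNat) := by
      apply Finset.sum_congr rfl
      intro i hi
      simp only
      rw [hgabs i hi]
      congr 2
      exact (Int.toNat_of_nonneg (hg0 i hi)).symm ▸ rfl
    rw [e1]
    have hinj' : ∀ i ∈ s, ∀ j ∈ s, (g i).toNat = (g j).toNat → i = j := by
      intro i hi j hj h
      apply hginj i hi j hj
      have := hg0 i hi; have := hg0 j hj
      omega
    rw [← Finset.sum_image (f := fun d : ℕ => (Real.sqrt d)⁻¹) hinj']
    have hsub : s.image (fun i => (g i).toNat) ⊆ Finset.range (2*n+1) := by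
      intro d hd
      rw [Finset.mem_image] at hd
      obtain ⟨i, hi, rfl⟩ := hd
      rw [Finset.mem_range]
      have := hg2 i hi
      omega
    calc ∑ d ∈ s.image (fun i => (g i).toNat), (Real.sqrt d)⁻¹
        ≤ ∑ d ∈ Finset.range (2*n+1), (Real.sqrt d)⁻¹ :=
          Finset.sum_le_sum_of_subset_of_nonneg hsub (fun d _ _ => fnn d)
    _ ≤ 2 * Real.sqrt (2*n+1) := by
          have := sqrt_harmonic' (2*n+1)
          calc ∑ d ∈ Finset.range (2*n+1), (Real.sqrt d)⁻¹ ≤ 2 * Real.sqrt ((2*n+1 : ℕ):ℝ) := this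
          _ = 2 * Real.sqrt (2*(n:ℝ)+1) := by push_cast; ring_nf
  have b1 : ∑ i ∈ (Finset.range n).filter (fun i : ℕ => (i:ℤ) < k), (Real.sqrt |(i:ℝ) - (k:ℝ)|)⁻¹
      ≤ 2 * Real.sqrt (2*n+1) := by
    apply side _ (fun i => k - (i:ℤ))
    · intro i hi; rw [Finset.mem_filter] at hi; omega
    · intro i hi; rw [Finset.mem_filter] at hi; omega
    · intro i _ j _ h; omega
    · intro i hi; rw [Finset.mem_filter] at hi
      have : (i:ℝ) - (k:ℝ) = -(((k - (i:ℤ)) : ℤ) : ℝ) := by push_cast; ring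
      rw [this, abs_neg, abs_of_nonneg]
      have : (0:ℤ) ≤ k - i := by omega
      exact_mod_cast this
  have b2 : ∑ i ∈ (Finset.range n).filter (fun i : ℕ => ¬ ((i:ℤ) < k)), (Real.sqrt |(i:ℝ) - (k:ℝ)|)⁻¹
      ≤ 2 * Real.sqrt (2*n+1) := by
    apply side _ (fun i => (i:ℤ) - k)
    · intro i hi; rw [Finset.mem_filter] at hi; omega
    · intro i hi; rw [Finset.mem_filter, Finset.mem_range] at hi; omega
    · intro i _ j _ h; omega
    · intro i hi
      rw [abs_of_nonneg]
      · push_cast; ring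
      · rw [Finset.mem_filter] at hi
        have : (0:ℤ) ≤ (i:ℤ) - k := by omega
        have : ((0:ℤ):ℝ) ≤ (((i:ℤ) - k : ℤ):ℝ) := by exact_mod_cast this
        push_cast at this ⊢; linarith
  linarith

lemma triEntry_le (p q : ℤ × ℤ) : triEntry p q ≤ |(p.1 : ℝ) - (q.1 : ℝ)|⁻¹ := by
  unfold triEntry; split
  · exact le_rfl
  · positivity

lemma vsum (n : ℕ) (p : ℕ → ℤ) (i j : ℕ) (k : ℤ) :
    ∑ v ∈ Finset.Icc (-(n:ℤ)) n, triEntry ((i:ℤ), p i) (k, v) * triEntry (k, v) ((j:ℤ), p j)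
      ≤ 3 * ((Real.sqrt |(i:ℝ) - (k:ℝ)|)⁻¹ * (Real.sqrt |(j:ℝ) - (k:ℝ)|)⁻¹) := by
  have rnn : (0:ℝ) ≤ 3 * ((Real.sqrt |(i:ℝ) - (k:ℝ)|)⁻¹ * (Real.sqrt |(j:ℝ) - (k:ℝ)|)⁻¹) := by
    positivity
  by_cases hik : (i:ℤ) = k
  · have : ∀ v : ℤ, triEntry ((i:ℤ), p i) (k, v) = 0 := by
      intro v; unfold triEntry; simp [hik]
    simp only [this, zero_mul, Finset.sum_const_zero]
    exact rnn
  by_cases hjk : (j:ℤ) = k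
  · have : ∀ v : ℤ, triEntry (k, v) ((j:ℤ), p j) = 0 := by
      intro v; unfold triEntry; simp [hjk]
    simp only [this, mul_zero, Finset.sum_const_zero]
    exact rnn
  set d1 : ℤ := |(i:ℤ) - k| with hd1def
  set d2 : ℤ := |(j:ℤ) - k| with hd2def
  have hd1 : 1 ≤ d1 := by
    have := abs_pos.mpr (sub_ne_zero.mpr hik); omega
  have hd2 : 1 ≤ d2 := by
    have := abs_pos.mpr (sub_ne_zero.mpr hjk); omega
  have hc1 : |(i:ℝ) - (k:ℝ)| = ((d1 : ℤ) : ℝ) := by rw [hd1def]; push_cast; ring_nf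
  have hc2 : |(j:ℝ) - (k:ℝ)| = ((d2 : ℤ) : ℝ) := by rw [hd2def]; push_cast; ring_nf
  have hd1r : (1:ℝ) ≤ (d1:ℝ) := by exact_mod_cast hd1
  have hd2r : (1:ℝ) ≤ (d2:ℝ) := by exact_mod_cast hd2
  set L := ∑ v ∈ Finset.Icc (-(n:ℤ)) n, triEntry ((i:ℤ), p i) (k, v) * triEntry (k, v) ((j:ℤ), p j)
    with hLdef
  have Lnn : 0 ≤ L := Finset.sum_nonneg fun v _ =>
    mul_nonneg (triEntry_nonneg _ _) (triEntry_nonneg _ _)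
  -- generic single bound
  have bound : ∀ (c : ℤ) (d : ℤ), 1 ≤ d →
      (∀ v : ℤ, triEntry ((i:ℤ), p i) (k, v) * triEntry (k, v) ((j:ℤ), p j)
        ≤ if v ∈ Finset.Icc (c - d) (c + d) then ((d1:ℝ))⁻¹ * ((d2:ℝ))⁻¹ else 0) →
      L ≤ (2*(d:ℝ)+1) * ((d1:ℝ)⁻¹ * (d2:ℝ)⁻¹) := by
    intro c d hd hv
    calc L ≤ ∑ v ∈ Finset.Icc (-(n:ℤ)) n,
          (if v ∈ Finset.Icc (c - d) (c + d) then ((d1:ℝ))⁻¹ * ((d2:ℝ))⁻¹ else 0) :=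
        Finset.sum_le_sum fun v _ => hv v
    _ = ∑ v ∈ Finset.Icc (-(n:ℤ)) n ∩ Finset.Icc (c - d) (c + d), ((d1:ℝ))⁻¹ * ((d2:ℝ))⁻¹ :=
        Finset.sum_ite_mem _ _ _
    _ ≤ (2*(d:ℝ)+1) * ((d1:ℝ)⁻¹ * (d2:ℝ)⁻¹) := by
        rw [Finset.sum_const, nsmul_eq_mul]
        have hcard : ((Finset.Icc (-(n:ℤ)) n ∩ Finset.Icc (c - d) (c + d)).card : ℝ)
            ≤ 2*(d:ℝ)+1 := by
          have h1 : (Finset.Icc (-(n:ℤ)) n ∩ Finset.Icc (c - d) (c + d)).card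
              ≤ (Finset.Icc (c - d) (c + d)).card :=
            Finset.card_le_card (Finset.inter_subset_right)
          have h2 : (Finset.Icc (c - d) (c + d)).card = (2*d+1).toNat := by
            rw [Int.card_Icc]; congr 1; ring
          have h3 : ((2*d+1).toNat : ℝ) = 2*(d:ℝ)+1 := by
            have : ((2*d+1).toNat : ℤ) = 2*d+1 := Int.toNat_of_nonneg (by omega)
            exact_mod_cast this
          calc ((Finset.Icc (-(n:ℤ)) n ∩ Finset.Icc (c - d) (c + d)).card : ℝ)
              ≤ ((Finset.Icc (c - d) (c + d)).card : ℝ) := by exact_mod_cast h1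
          _ = 2*(d:ℝ)+1 := by rw [h2]; exact h3
        have : (0:ℝ) ≤ (d1:ℝ)⁻¹ * (d2:ℝ)⁻¹ := by positivity
        exact mul_le_mul_of_nonneg_right hcard this
  have bA : L ≤ (2*(d1:ℝ)+1) * ((d1:ℝ)⁻¹ * (d2:ℝ)⁻¹) := by
    apply bound (p i) d1 hd1
    intro v
    by_cases hmem : v ∈ Finset.Icc (p i - d1) (p i + d1)
    · rw [if_pos hmem]
      have t1 : triEntry ((i:ℤ), p i) (k, v) ≤ (d1:ℝ)⁻¹ := by
        have := triEntry_le ((i:ℤ), p i) (k, v)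
        simpa [hc1] using this
      have t2 : triEntry (k, v) ((j:ℤ), p j) ≤ (d2:ℝ)⁻¹ := by
        have := triEntry_le (k, v) ((j:ℤ), p j)
        simp only at this
        rw [abs_sub_comm] at this
        simpa [hc2] using this
      exact mul_le_mul t1 t2 (triEntry_nonneg _ _) (by positivity)
    · rw [if_neg hmem]
      have : triEntry ((i:ℤ), p i) (k, v) = 0 := by
        unfold triEntry
        rw [if_neg]
        rintro ⟨-, habs⟩
        rw [Finset.mem_Icc] at hmem
        rw [← hd1def] at habs
        have := abs_le.mp habs
        omega
      rw [this, zero_mul]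
  have bB : L ≤ (2*(d2:ℝ)+1) * ((d1:ℝ)⁻¹ * (d2:ℝ)⁻¹) := by
    apply bound (p j) d2 hd2
    intro v
    by_cases hmem : v ∈ Finset.Icc (p j - d2) (p j + d2)
    · rw [if_pos hmem]
      have t1 : triEntry ((i:ℤ), p i) (k, v) ≤ (d1:ℝ)⁻¹ := by
        have := triEntry_le ((i:ℤ), p i) (k, v)
        simpa [hc1] using this
      have t2 : triEntry (k, v) ((j:ℤ), p j) ≤ (d2:ℝ)⁻¹ := by
        have := triEntry_le (k, v) ((j:ℤ), p j)
        simp only at this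
        rw [abs_sub_comm] at this
        simpa [hc2] using this
      exact mul_le_mul t1 t2 (triEntry_nonneg _ _) (by positivity)
    · rw [if_neg hmem]
      have : triEntry (k, v) ((j:ℤ), p j) = 0 := by
        unfold triEntry
        rw [if_neg]
        rintro ⟨-, habs⟩
        simp only at habs
        rw [Finset.mem_Icc] at hmem
        rw [abs_sub_comm k ((j:ℤ)), ← hd2def] at habs
        have := abs_le.mp habs
        omega
      rw [this, mul_zero]
  -- combine
  have bA' : L ≤ 3 * (d2:ℝ)⁻¹ := by
    calc L ≤ (2*(d1:ℝ)+1) * ((d1:ℝ)⁻¹ * (d2:ℝ)⁻¹) := bA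
    _ ≤ (3*(d1:ℝ)) * ((d1:ℝ)⁻¹ * (d2:ℝ)⁻¹) := by
        have : (0:ℝ) ≤ (d1:ℝ)⁻¹ * (d2:ℝ)⁻¹ := by positivity
        nlinarith
    _ = 3 * ((d1:ℝ) * (d1:ℝ)⁻¹) * (d2:ℝ)⁻¹ := by ring
    _ = 3 * (d2:ℝ)⁻¹ := by rw [mul_inv_cancel₀ (by linarith)]; ring
  have bB' : L ≤ 3 * (d1:ℝ)⁻¹ := by
    calc L ≤ (2*(d2:ℝ)+1) * ((d1:ℝ)⁻¹ * (d2:ℝ)⁻¹) := bB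
    _ ≤ (3*(d2:ℝ)) * ((d1:ℝ)⁻¹ * (d2:ℝ)⁻¹) := by
        have : (0:ℝ) ≤ (d1:ℝ)⁻¹ * (d2:ℝ)⁻¹ := by positivity
        nlinarith
    _ = 3 * ((d2:ℝ) * (d2:ℝ)⁻¹) * (d1:ℝ)⁻¹ := by ring
    _ = 3 * (d1:ℝ)⁻¹ := by rw [mul_inv_cancel₀ (by linarith)]; ring
  rw [hc1, hc2]
  have hsq : L ≤ Real.sqrt (9 * ((d1:ℝ)⁻¹ * (d2:ℝ)⁻¹)) := by
    rw [Real.le_sqrt Lnn (by positivity)]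
    have h1 : (0:ℝ) < (d1:ℝ)⁻¹ := by positivity
    have h2 : (0:ℝ) < (d2:ℝ)⁻¹ := by positivity
    nlinarith [bA', bB', Lnn]
  calc L ≤ Real.sqrt (9 * ((d1:ℝ)⁻¹ * (d2:ℝ)⁻¹)) := hsq
  _ = 3 * ((Real.sqrt (d1:ℝ))⁻¹ * (Real.sqrt (d2:ℝ))⁻¹) := by
      rw [Real.sqrt_mul (by norm_num), Real.sqrt_mul (by positivity), Real.sqrt_inv,
        Real.sqrt_inv]
      congr 1
      rw [show (9:ℝ) = 3^2 by norm_num, Real.sqrt_sq (by norm_num)]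

lemma triple_reorg (s : Finset ℕ) (t : Finset ℤ) (a : ℕ → ℤ → ℝ) :
    ∑ i ∈ s, ∑ j ∈ s, ∑ k ∈ t, 3 * (a i k * a j k) = 3 * ∑ k ∈ t, (∑ i ∈ s, a i k)^2 := by
  calc ∑ i ∈ s, ∑ j ∈ s, ∑ k ∈ t, 3 * (a i k * a j k)
      = ∑ i ∈ s, ∑ k ∈ t, ∑ j ∈ s, 3 * (a i k * a j k) :=
        Finset.sum_congr rfl fun i _ => Finset.sum_comm
  _ = ∑ k ∈ t, ∑ i ∈ s, ∑ j ∈ s, 3 * (a i k * a j k) := Finset.sum_comm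
  _ = 3 * ∑ k ∈ t, (∑ i ∈ s, a i k)^2 := by
      rw [Finset.mul_sum]
      apply Finset.sum_congr rfl
      intro k _
      rw [sq, Finset.sum_mul_sum]
      rw [Finset.mul_sum]
      apply Finset.sum_congr rfl
      intro i _
      rw [Finset.mul_sum]

lemma upper_bound (n : ℕ) (hn : 1 ≤ n) (p : ℕ → ℤ) :
    (∑ i ∈ Finset.range n, ∑ j ∈ Finset.range n, ∑ q ∈ triVertices n,
      triEntry ((i : ℤ), p i) q * triEntry q ((j : ℤ), p j)) ≤ 432 * (n : ℝ) ^ 2 := by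
  set h : ℕ → ℤ → ℝ := fun i k => (Real.sqrt |(i:ℝ) - (k:ℝ)|)⁻¹ with hh
  have step1 : ∀ i j : ℕ, ∑ q ∈ triVertices n, triEntry ((i : ℤ), p i) q * triEntry q ((j : ℤ), p j)
      ≤ ∑ k ∈ Finset.Icc (-(n:ℤ)) n, 3 * (h i k * h j k) := by
    intro i j
    calc ∑ q ∈ triVertices n, triEntry ((i : ℤ), p i) q * triEntry q ((j : ℤ), p j)
        ≤ ∑ q ∈ Finset.Icc (-(n : ℤ)) n ×ˢ Finset.Icc (-(n : ℤ)) n,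
            triEntry ((i : ℤ), p i) q * triEntry q ((j : ℤ), p j) :=
          Finset.sum_le_sum_of_subset_of_nonneg (Finset.filter_subset _ _)
            (fun q _ _ => mul_nonneg (triEntry_nonneg _ _) (triEntry_nonneg _ _))
    _ = ∑ k ∈ Finset.Icc (-(n:ℤ)) n, ∑ v ∈ Finset.Icc (-(n:ℤ)) n,
          triEntry ((i : ℤ), p i) (k, v) * triEntry (k, v) ((j : ℤ), p j) :=
        Finset.sum_product _ _ _
    _ ≤ ∑ k ∈ Finset.Icc (-(n:ℤ)) n, 3 * (h i k * h j k) :=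
        Finset.sum_le_sum fun k _ => vsum n p i j k
  calc (∑ i ∈ Finset.range n, ∑ j ∈ Finset.range n, ∑ q ∈ triVertices n,
      triEntry ((i : ℤ), p i) q * triEntry q ((j : ℤ), p j))
      ≤ ∑ i ∈ Finset.range n, ∑ j ∈ Finset.range n, ∑ k ∈ Finset.Icc (-(n:ℤ)) n,
          3 * (h i k * h j k) := by
        apply Finset.sum_le_sum; intro i _
        apply Finset.sum_le_sum; intro j _
        exact step1 i j
  _ = 3 * ∑ k ∈ Finset.Icc (-(n:ℤ)) n, (∑ i ∈ Finset.range n, h i k)^2 :=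
      triple_reorg _ _ _
  _ ≤ 3 * ∑ k ∈ Finset.Icc (-(n:ℤ)) n, (16 * (2*(n:ℝ)+1)) := by
      apply mul_le_mul_of_nonneg_left _ (by norm_num)
      apply Finset.sum_le_sum
      intro k hk
      rw [Finset.mem_Icc] at hk
      have hH := hsum n k hk.1 hk.2
      have hHnn : 0 ≤ ∑ i ∈ Finset.range n, h i k :=
        Finset.sum_nonneg fun i _ => by positivity
      have hsqrt : (4 * Real.sqrt (2*(n:ℝ)+1))^2 = 16 * (2*(n:ℝ)+1) := by
        rw [mul_pow, Real.sq_sqrt (by positivity)]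
        norm_num
      calc (∑ i ∈ Finset.range n, h i k)^2 ≤ (4 * Real.sqrt (2*(n:ℝ)+1))^2 := by
            apply pow_le_pow_left₀ hHnn hH
      _ = 16 * (2*(n:ℝ)+1) := hsqrt
  _ ≤ 432 * (n : ℝ) ^ 2 := by
      rw [Finset.sum_const, nsmul_eq_mul]
      have hcard : ((Finset.Icc (-(n:ℤ)) n).card : ℝ) = 2*(n:ℝ)+1 := by
        rw [Int.card_Icc]
        have : ((n:ℤ) + 1 - -(n:ℤ)).toNat = 2*n+1 := by omega
        rw [this]; push_cast; ring
      rw [hcard]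
      have h3 : 2*(n:ℝ)+1 ≤ 3*(n:ℝ) := by
        have : (1:ℝ) ≤ (n:ℝ) := by exact_mod_cast hn
        linarith
      nlinarith [h3, sq_nonneg ((n:ℝ))]

lemma triEntry_val (i : ℕ) (u : ℤ) (k : ℤ) (v : ℤ) (h1 : (i:ℤ) < k) (h2 : |u - v| ≤ k - i) :
    triEntry ((i:ℤ), u) (k, v) = (((k - i : ℤ)):ℝ)⁻¹ := by
  have hcond : (((i:ℤ), u)).1 ≠ ((k, v)).1 ∧
      |(((i:ℤ), u)).2 - ((k, v)).2| ≤ |(((i:ℤ), u)).1 - ((k, v)).1| := by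
    dsimp only
    constructor
    · omega
    · rw [show |(i:ℤ) - k| = k - i by rw [abs_sub_comm]; exact abs_of_nonneg (by omega)]
      exact h2
  unfold triEntry
  rw [if_pos hcond]
  dsimp only
  rw [abs_sub_comm]
  push_cast
  rw [abs_of_nonneg (by exact_mod_cast (by omega : (0:ℤ) ≤ k - i))]

lemma triEntry_val' (j : ℕ) (u : ℤ) (k : ℤ) (v : ℤ) (h1 : (j:ℤ) < k) (h2 : |v - u| ≤ k - j) :
    triEntry (k, v) ((j:ℤ), u) = (((k - j : ℤ)):ℝ)⁻¹ := by
  have hcond : ((k, v)).1 ≠ (((j:ℤ), u)).1 ∧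
      |((k, v)).2 - (((j:ℤ), u)).2| ≤ |((k, v)).1 - (((j:ℤ), u)).1| := by
    dsimp only
    constructor
    · omega
    · rw [show |k - (j:ℤ)| = k - j from abs_of_nonneg (by omega)]
      exact h2
  unfold triEntry
  rw [if_pos hcond]
  dsimp only
  push_cast
  rw [abs_of_nonneg (by exact_mod_cast (by omega : (0:ℤ) ≤ k - j))]

lemma pair_lower (n : ℕ) (hn : 8 ≤ n) (p : ℕ → ℤ) (h0 : p 0 = 0)
    (hs : ∀ i : ℕ, |p (i + 1) - p i| = 1) (i j : ℕ) (hi : i < n / 4) (hj : j < n / 4) :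
    (1/8 : ℝ) ≤ ∑ q ∈ triVertices n, triEntry ((i : ℤ), p i) q * triEntry q ((j : ℤ), p j) := by
  set m := max i j with hm
  have him : i ≤ m := le_max_left _ _
  have hjm : j ≤ m := le_max_right _ _
  have hmr : m < n / 4 := by omega
  set D : Finset (ℕ × ℕ) := (Finset.Ico (n/2) n) ×ˢ (Finset.range (n/2 - m)) with hD
  set e : ℕ × ℕ → ℤ × ℤ :=
    fun kt => ((kt.1 : ℤ), p m + ((kt.1 : ℤ) - (m : ℤ)) - 2 * kt.2) with he
  have hpm : |p m| ≤ (m:ℤ) := by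
    have := path_lip p hs m 0
    simpa [h0] using this
  have hpm' := abs_le.mp hpm
  -- basic facts for (k,t) ∈ D
  have hDfact : ∀ kt ∈ D, n/2 ≤ kt.1 ∧ kt.1 < n ∧ kt.2 < n/2 - m := by
    intro kt hkt
    rw [hD, Finset.mem_product, Finset.mem_Ico, Finset.mem_range] at hkt
    exact ⟨hkt.1.1, hkt.1.2, hkt.2⟩
  -- membership
  have hmem : ∀ kt ∈ D, e kt ∈ triVertices n := by
    intro kt hkt
    obtain ⟨hk1, hk2, ht⟩ := hDfact kt hkt
    obtain ⟨k, t⟩ := kt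
    simp only at hk1 hk2 ht
    rw [he]
    simp only
    set v : ℤ := p m + ((k : ℤ) - (m : ℤ)) - 2 * t with hv
    have hvabs : -(k:ℤ) ≤ v ∧ v ≤ (k:ℤ) := by
      constructor <;> (rw [hv]; push_cast; omega)
    unfold triVertices
    rw [Finset.mem_filter, Finset.mem_product, Finset.mem_Icc, Finset.mem_Icc]
    dsimp only
    refine ⟨⟨⟨by omega, by exact_mod_cast hk2.le⟩, ?_, ?_⟩, by positivity, by exact_mod_cast hk2, ?_, ?_⟩
    · have : -((n:ℤ)) ≤ -(k:ℤ) := by omega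
      omega
    · omega
    · rw [abs_le]; exact hvabs
    · have hpar := path_parity p h0 hs m
      rw [hv]; push_cast; omega
  -- injectivity
  have hinj : ∀ x ∈ D, ∀ y ∈ D, e x = e y → x = y := by
    intro x _ y _ hxy
    rw [he] at hxy
    simp only [Prod.mk.injEq] at hxy
    obtain ⟨h1, h2⟩ := hxy
    have : x.1 = y.1 := by exact_mod_cast h1
    have : x.2 = y.2 := by omega
    exact Prod.ext ‹x.1 = y.1› this
  -- value bound
  have hval : ∀ kt ∈ D, ((n:ℝ)^2)⁻¹ ≤
      triEntry ((i : ℤ), p i) (e kt) * triEntry (e kt) ((j : ℤ), p j) := by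
    intro kt hkt
    obtain ⟨hk1, hk2, ht⟩ := hDfact kt hkt
    obtain ⟨k, t⟩ := kt
    simp only at hk1 hk2 ht
    rw [he]; simp only
    set v : ℤ := p m + ((k : ℤ) - (m : ℤ)) - 2 * t with hv
    have hik : (i:ℤ) < (k:ℤ) := by exact_mod_cast (by omega : i < k)
    have hjk : (j:ℤ) < (k:ℤ) := by exact_mod_cast (by omega : j < k)
    have hpi : |p i - p m| ≤ (m:ℤ) - i := by
      have := path_lip p hs i m
      rwa [show |(i:ℤ) - (m:ℤ)| = (m:ℤ) - i by rw [abs_sub_comm]; exact abs_of_nonneg (by omega)] at this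
    have hpj : |p j - p m| ≤ (m:ℤ) - j := by
      have := path_lip p hs j m
      rwa [show |(j:ℤ) - (m:ℤ)| = (m:ℤ) - j from by rw [abs_sub_comm]; exact abs_of_nonneg (by omega)] at this
    have hpi' := abs_le.mp hpi
    have hpj' := abs_le.mp hpj
    have e1 : triEntry ((i : ℤ), p i) ((k:ℤ), v) = ((((k:ℤ) - i : ℤ)):ℝ)⁻¹ := by
      apply triEntry_val i (p i) (k:ℤ) v hik
      rw [abs_le, hv]
      constructor <;> (push_cast; omega)
    have e2 : triEntry ((k:ℤ), v) ((j : ℤ), p j) = ((((k:ℤ) - j : ℤ)):ℝ)⁻¹ := by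
      apply triEntry_val' j (p j) (k:ℤ) v hjk
      rw [abs_le, hv]
      constructor <;> (push_cast; omega)
    rw [e1, e2]
    have hb1 : (0:ℝ) < (((k:ℤ) - i : ℤ):ℝ) := by exact_mod_cast (by omega : (0:ℤ) < (k:ℤ) - i)
    have hb2 : (0:ℝ) < (((k:ℤ) - j : ℤ):ℝ) := by exact_mod_cast (by omega : (0:ℤ) < (k:ℤ) - j)
    have hb1' : (((k:ℤ) - i : ℤ):ℝ) ≤ (n:ℝ) := by
      have : ((k:ℤ) - i : ℤ) ≤ (n:ℤ) := by omega
      exact_mod_cast this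
    have hb2' : (((k:ℤ) - j : ℤ):ℝ) ≤ (n:ℝ) := by
      have : ((k:ℤ) - j : ℤ) ≤ (n:ℤ) := by omega
      exact_mod_cast this
    have hnpos : (0:ℝ) < (n:ℝ) := by positivity
    rw [show ((n:ℝ)^2)⁻¹ = (n:ℝ)⁻¹ * (n:ℝ)⁻¹ by rw [sq, mul_inv]]
    gcongr
  -- assemble
  have sum_ge : ∑ kt ∈ D, (((n:ℝ)^2)⁻¹) ≤
      ∑ q ∈ triVertices n, triEntry ((i : ℤ), p i) q * triEntry q ((j : ℤ), p j) := by
    calc ∑ kt ∈ D, (((n:ℝ)^2)⁻¹)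
        ≤ ∑ kt ∈ D, triEntry ((i : ℤ), p i) (e kt) * triEntry (e kt) ((j : ℤ), p j) :=
          Finset.sum_le_sum hval
    _ = ∑ q ∈ D.image e, triEntry ((i : ℤ), p i) q * triEntry q ((j : ℤ), p j) :=
          (Finset.sum_image (f := fun q => triEntry ((i : ℤ), p i) q * triEntry q ((j : ℤ), p j)) hinj).symm
    _ ≤ ∑ q ∈ triVertices n, triEntry ((i : ℤ), p i) q * triEntry q ((j : ℤ), p j) := by
          apply Finset.sum_le_sum_of_subset_of_nonneg
          · intro q hq
            rw [Finset.mem_image] at hq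
            obtain ⟨kt, hkt, rfl⟩ := hq
            exact hmem kt hkt
          · exact fun q _ _ => mul_nonneg (triEntry_nonneg _ _) (triEntry_nonneg _ _)
  refine le_trans ?_ sum_ge
  rw [Finset.sum_const, nsmul_eq_mul]
  rw [hD, Finset.card_product, Nat.card_Ico, Finset.card_range]
  have hA : (n:ℝ) / 2 ≤ ((n - n/2 : ℕ) : ℝ) := by
    have : n ≤ 2 * (n - n/2) := by omega
    have := (Nat.cast_le (α := ℝ)).mpr this
    push_cast at this
    linarith
  have hB : (n:ℝ) / 4 ≤ ((n/2 - m : ℕ) : ℝ) := by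
    have : n ≤ 4 * (n/2 - m) := by omega
    have := (Nat.cast_le (α := ℝ)).mpr this
    push_cast at this
    linarith
  have hnpos : (0:ℝ) < (n:ℝ) := by positivity
  have : ((n - n/2 : ℕ) * (n/2 - m : ℕ) : ℝ) ≥ (n:ℝ)/2 * ((n:ℝ)/4) := by
    push_cast
    have h1 : (0:ℝ) ≤ (n:ℝ)/2 := by positivity
    nlinarith [hA, hB]
  calc (1/8 : ℝ) = ((n:ℝ)/2 * ((n:ℝ)/4)) * ((n:ℝ)^2)⁻¹ := by
        field_simp; ring
  _ ≤ (((n - n/2 : ℕ) * (n/2 - m : ℕ) : ℕ) : ℝ) * ((n:ℝ)^2)⁻¹ := by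
        have hinv : (0:ℝ) ≤ ((n:ℝ)^2)⁻¹ := by positivity
        apply mul_le_mul_of_nonneg_right _ hinv
        push_cast
        push_cast at this
        linarith

/-- For any directed path `π_i = (i, p i)` with `p 0 = 0` and unit vertical
steps, there are constants `c, C > 0` such that for all `n ≥ 2`,
`c n² ≤ 𝟙_π^T A_n² 𝟙_π ≤ C n²`, where
`𝟙_π^T A_n² 𝟙_π = ∑_{i,j < n} ∑_{q ∈ V_n} A_n[(i,p i), q] · A_n[q, (j,p j)]`. -/
theorem path_quadratic_form_sq_asymp :
    ∃ c C : ℝ, 0 < c ∧ 0 < C ∧ ∀ n : ℕ, 2 ≤ n → ∀ p : ℕ → ℤ, p 0 = 0 →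
      (∀ i : ℕ, |p (i + 1) - p i| = 1) →
      c * (n : ℝ) ^ 2 ≤
        (∑ i ∈ Finset.range n, ∑ j ∈ Finset.range n, ∑ q ∈ triVertices n,
          triEntry ((i : ℤ), p i) q * triEntry q ((j : ℤ), p j)) ∧
      (∑ i ∈ Finset.range n, ∑ j ∈ Finset.range n, ∑ q ∈ triVertices n,
          triEntry ((i : ℤ), p i) q * triEntry q ((j : ℤ), p j)) ≤
        C * (n : ℝ) ^ 2 := by
  refine ⟨1/512, 432, by norm_num, by norm_num, ?_⟩
  intro n hn p h0 hs
  constructor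
  · -- lower bound
    have inner_nonneg : ∀ i j : ℕ, (0:ℝ) ≤ ∑ q ∈ triVertices n,
        triEntry ((i : ℤ), p i) q * triEntry q ((j : ℤ), p j) :=
      fun i j => Finset.sum_nonneg fun q _ =>
        mul_nonneg (triEntry_nonneg _ _) (triEntry_nonneg _ _)
    by_cases hbig : 8 ≤ n
    · -- main case
      have hsub : Finset.range (n/4) ⊆ Finset.range n :=
        Finset.range_subset_range.mpr (by omega)
      have step1 : ∑ i ∈ Finset.range (n/4), ∑ j ∈ Finset.range (n/4),
          ∑ q ∈ triVertices n, triEntry ((i : ℤ), p i) q * triEntry q ((j : ℤ), p j)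
          ≤ ∑ i ∈ Finset.range n, ∑ j ∈ Finset.range n,
          ∑ q ∈ triVertices n, triEntry ((i : ℤ), p i) q * triEntry q ((j : ℤ), p j) := by
        calc ∑ i ∈ Finset.range (n/4), ∑ j ∈ Finset.range (n/4),
            ∑ q ∈ triVertices n, triEntry ((i : ℤ), p i) q * triEntry q ((j : ℤ), p j)
            ≤ ∑ i ∈ Finset.range (n/4), ∑ j ∈ Finset.range n,
            ∑ q ∈ triVertices n, triEntry ((i : ℤ), p i) q * triEntry q ((j : ℤ), p j) := by
              apply Finset.sum_le_sum
              intro i _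
              exact Finset.sum_le_sum_of_subset_of_nonneg hsub fun j _ _ => inner_nonneg i j
        _ ≤ ∑ i ∈ Finset.range n, ∑ j ∈ Finset.range n,
            ∑ q ∈ triVertices n, triEntry ((i : ℤ), p i) q * triEntry q ((j : ℤ), p j) := by
              apply Finset.sum_le_sum_of_subset_of_nonneg hsub
              intro i _ _
              exact Finset.sum_nonneg fun j _ => inner_nonneg i j
      have step2 : ((n/4 : ℕ) : ℝ)^2 * (1/8 : ℝ) ≤ ∑ i ∈ Finset.range (n/4),
          ∑ j ∈ Finset.range (n/4),
          ∑ q ∈ triVertices n, triEntry ((i : ℤ), p i) q * triEntry q ((j : ℤ), p j) := by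
        have hrow : ∀ i ∈ Finset.range (n/4), ((n/4 : ℕ) : ℝ) * (1/8 : ℝ) ≤
            ∑ j ∈ Finset.range (n/4),
            ∑ q ∈ triVertices n, triEntry ((i : ℤ), p i) q * triEntry q ((j : ℤ), p j) := by
          intro i hi
          rw [Finset.mem_range] at hi
          have hcell : ∀ j ∈ Finset.range (n/4), (1/8 : ℝ) ≤
              ∑ q ∈ triVertices n, triEntry ((i : ℤ), p i) q * triEntry q ((j : ℤ), p j) := by
            intro j hj
            rw [Finset.mem_range] at hj
            exact pair_lower n hbig p h0 hs i j hi hj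
          calc ((n/4 : ℕ) : ℝ) * (1/8 : ℝ)
              = ∑ _j ∈ Finset.range (n/4), (1/8 : ℝ) := by
                rw [Finset.sum_const, Finset.card_range, nsmul_eq_mul]
          _ ≤ _ := Finset.sum_le_sum hcell
        calc ((n/4 : ℕ) : ℝ)^2 * (1/8 : ℝ)
            = ∑ _i ∈ Finset.range (n/4), (((n/4 : ℕ) : ℝ) * (1/8 : ℝ)) := by
              rw [Finset.sum_const, Finset.card_range, nsmul_eq_mul]; ring
        _ ≤ _ := Finset.sum_le_sum hrow
      have hq : (n:ℝ)/8 ≤ ((n/4 : ℕ) : ℝ) := by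
        have h8 : n ≤ 8 * (n/4) := by omega
        have := (Nat.cast_le (α := ℝ)).mpr h8
        push_cast at this
        linarith
      have hnn : (0:ℝ) ≤ (n:ℝ)/8 := by positivity
      calc (1/512 : ℝ) * (n:ℝ)^2 ≤ ((n:ℝ)/8)^2 * (1/8 : ℝ) := by nlinarith [sq_nonneg ((n:ℝ))]
      _ ≤ ((n/4 : ℕ) : ℝ)^2 * (1/8 : ℝ) := by
            apply mul_le_mul_of_nonneg_right _ (by norm_num)
            exact pow_le_pow_left₀ hnn hq 2
      _ ≤ _ := le_trans step2 step1
    · -- small case: n < 8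
      have hS1 : (1:ℝ) ≤ ∑ i ∈ Finset.range n, ∑ j ∈ Finset.range n,
          ∑ q ∈ triVertices n, triEntry ((i : ℤ), p i) q * triEntry q ((j : ℤ), p j) := by
        have hq : ((1:ℤ), (1:ℤ)) ∈ triVertices n := by
          unfold triVertices
          rw [Finset.mem_filter, Finset.mem_product]
          simp only [Finset.mem_Icc]
          refine ⟨⟨⟨by omega, by omega⟩, by omega, by omega⟩, by norm_num, by omega, ?_, by norm_num⟩
          norm_num
        have hval : triEntry ((0:ℤ), p 0) ((1:ℤ), (1:ℤ)) *
            triEntry ((1:ℤ), (1:ℤ)) ((0:ℤ), p 0) = 1 := by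
          unfold triEntry
          rw [h0]
          norm_num
        have t0 : (1:ℝ) ≤ ∑ q ∈ triVertices n,
            triEntry ((0:ℤ), p 0) q * triEntry q ((0:ℤ), p 0) := by
          refine le_trans (le_of_eq hval.symm) (Finset.single_le_sum
            (f := fun q => triEntry ((0:ℤ), p 0) q * triEntry q ((0:ℤ), p 0))
            (fun q _ => mul_nonneg (triEntry_nonneg _ _) (triEntry_nonneg _ _)) hq)
        have h0mem : 0 ∈ Finset.range n := Finset.mem_range.mpr (by omega)
        have t1 : (1:ℝ) ≤ ∑ j ∈ Finset.range n,
            ∑ q ∈ triVertices n, triEntry ((0:ℤ), p 0) q * triEntry q ((j : ℤ), p j) := by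
          refine le_trans ?_ (Finset.single_le_sum
            (f := fun j : ℕ => ∑ q ∈ triVertices n,
              triEntry ((0:ℤ), p 0) q * triEntry q ((j : ℤ), p j))
            (fun j _ => inner_nonneg 0 j) h0mem)
          simpa using t0
        refine le_trans t1 (Finset.single_le_sum
          (f := fun i : ℕ => ∑ j ∈ Finset.range n, ∑ q ∈ triVertices n,
            triEntry ((i : ℤ), p i) q * triEntry q ((j : ℤ), p j))
          (fun i _ => Finset.sum_nonneg fun j _ => inner_nonneg i j) h0mem)
      have hn7 : (n:ℝ) ≤ 7 := by exact_mod_cast (by omega : n ≤ 7)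
      have hn0 : (0:ℝ) ≤ (n:ℝ) := by positivity
      calc (1/512 : ℝ) * (n:ℝ)^2 ≤ (1/512 : ℝ) * 49 := by nlinarith
      _ ≤ 1 := by norm_num
      _ ≤ _ := hS1
  · -- upper bound
    exact upper_bound n (by omega) p
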